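/- arXiv:2202.00491 — 2 statements merged into one kernel-verified Lean document; each statement's English description precedes it below -/
import Mathlib

section
/- Let x ∈ Lip(□^d, ℝ^n) have Lipschitz constant L (with respect to the Euclidean norms). Then the sum 1 + Σ_{m≥1} Σ_{(P,π) ∈ O_{d,n}^m × Σ_m^d} |Φ_m^{P,π}(x)|² is finite; more precisely it is at most Σ_{m≥0} binom(n,d)^m · L^{2dm} / (m!)^d, which is a convergent series. (Hence the mapping space signature Φ(x) = (Φ_m^{P,π}(x)) lies in the ℓ² space over the countable index set of all (m, P, π).) -/
open MeasureTheory Matrix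
open scoped ENNReal

open scoped Classical

noncomputable section

/-- The unit cube `[0,1]^d` as a subset of `Fin d → ℝ`. -/
def unitCube (d : ℕ) : Set (Fin d → ℝ) := Set.Icc 0 1

/-- Lipschitz condition with constant `L`, with respect to Euclidean norms. -/
def EuclidLip {d n : ℕ} (L : ℝ) (x : (Fin d → ℝ) → Fin n → ℝ) : Prop :=
  ∀ s t : Fin d → ℝ,
    Real.sqrt (∑ k, (x s k - x t k) ^ 2) ≤ L * Real.sqrt (∑ j, (s j - t j) ^ 2)

/-- Lipschitz map. -/
def IsLipMap {d n : ℕ} (x : (Fin d → ℝ) → Fin n → ℝ) : Prop :=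
  ∃ L : ℝ, EuclidLip L x

/-- The Jacobian minor `J[x_P](s)`: the determinant of the `d × d` matrix
with `(i,j)` entry `∂ x_{P i} / ∂ s_j (s)`. -/
def jacobianMinor {d n : ℕ} (x : (Fin d → ℝ) → Fin n → ℝ) (P : Fin d → Fin n)
    (s : Fin d → ℝ) : ℝ :=
  (Matrix.of fun i j : Fin d => fderiv ℝ (fun t => x t (P i)) s (Pi.single j 1)).det

/-- The permuted `m`-simplex `Δ^m_π(a,b)`. -/
def permSimplex {m : ℕ} (π : Equiv.Perm (Fin m)) (a b : ℝ) : Set (Fin m → ℝ) :=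
  {u | (∀ i, u i ∈ Set.Icc a b) ∧ StrictMono fun i => u (π i)}

/-- The integration domain `D^{m,d}_π(a,b) = Δ^m_{π 1}(a₁,b₁) × ⋯ × Δ^m_{π d}(a_d,b_d)`. -/
def intDomain {m d : ℕ} (π : Fin d → Equiv.Perm (Fin m)) (a b : Fin d → ℝ) :
    Set (Fin m → Fin d → ℝ) :=
  {t | ∀ j, (fun i => t i j) ∈ permSimplex (π j) (a j) (b j)}

/-- The restricted mapping space monomial `Φ_m^{P,π}(x)_{a,b}`. -/
def msMonomialOn {d n m : ℕ} (x : (Fin d → ℝ) → Fin n → ℝ)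
    (P : Fin m → Fin d → Fin n) (π : Fin d → Equiv.Perm (Fin m))
    (a b : Fin d → ℝ) : ℝ :=
  ∫ t in intDomain π a b, ∏ i, jacobianMinor x (P i) (t i)

/-- The mapping space monomial `Φ_m^{P,π}(x)`. -/
def msMonomial {d n m : ℕ} (x : (Fin d → ℝ) → Fin n → ℝ)
    (P : Fin m → Fin d → Fin n) (π : Fin d → Equiv.Perm (Fin m)) : ℝ :=
  msMonomialOn x P π (fun _ => 0) (fun _ => 1)

/-- The level-`m` square sum `Σ_{(P,π)} |Φ_m^{P,π}(x)|²` over all level-`m` indices. -/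
def levelSum (d n m : ℕ) (x : (Fin d → ℝ) → Fin n → ℝ) : ℝ :=
  ∑ P ∈ Finset.univ.filter (fun P : Fin m → Fin d → Fin n => ∀ i, StrictMono (P i)),
    ∑ π : Fin d → Equiv.Perm (Fin m), (msMonomial x P π) ^ 2


/-- Hadamard-style bound: if each row of `A` has squared Euclidean norm at most `L ^ 2`,
then `|det A| ≤ L ^ d`. -/
lemma abs_det_le_of_rows (d : ℕ) (hd : 1 ≤ d) (A : Matrix (Fin d) (Fin d) ℝ) (L : ℝ)
    (hL : 0 ≤ L) (h : ∀ i, ∑ j, A i j ^ 2 ≤ L ^ 2) : |A.det| ≤ L ^ d := by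
  classical
  set S := A * Aᴴ with hSdef
  have hS : S.PosSemidef := Matrix.posSemidef_self_mul_conjTranspose A
  have hherm : S.IsHermitian := hS.1
  have hdet : S.det = A.det ^ 2 := by
    rw [hSdef, Matrix.det_mul, Matrix.det_conjTranspose, star_trivial, sq]
  have htrace_le : S.trace ≤ (d : ℝ) * L ^ 2 := by
    have h1 : S.trace = ∑ i, ∑ j, A i j ^ 2 := by
      simp [hSdef, Matrix.trace, Matrix.diag, Matrix.mul_apply, Matrix.conjTranspose_apply, sq]
    rw [h1]
    calc ∑ i, ∑ j, A i j ^ 2 ≤ ∑ _i : Fin d, L ^ 2 := Finset.sum_le_sum fun i _ => h i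
      _ = (d : ℝ) * L ^ 2 := by simp [Finset.sum_const, nsmul_eq_mul]
  have hev := hS.eigenvalues_nonneg
  have hdet2 : S.det = ∏ i, hherm.eigenvalues i := by simpa using hherm.det_eq_prod_eigenvalues
  have htr2 : S.trace = ∑ i, hherm.eigenvalues i := by
    calc S.trace = ((hherm.eigenvectorUnitary : Matrix (Fin d) (Fin d) ℝ) *
          Matrix.diagonal (RCLike.ofReal ∘ hherm.eigenvalues) *
          (star (hherm.eigenvectorUnitary : Matrix (Fin d) (Fin d) ℝ))).trace := by
            conv_lhs => rw [hherm.spectral_theorem]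
            rfl
      _ = ∑ i, hherm.eigenvalues i := by
          rw [Matrix.trace_mul_cycle]
          rw [show (star (hherm.eigenvectorUnitary : Matrix (Fin d) (Fin d) ℝ)) *
              (hherm.eigenvectorUnitary : Matrix (Fin d) (Fin d) ℝ) = 1 from
            Matrix.mem_unitaryGroup_iff'.mp hherm.eigenvectorUnitary.2]
          simp [Matrix.trace_diagonal]
  have hd0 : (0:ℝ) < d := by exact_mod_cast hd
  -- AM-GM
  have hw : ∑ _i : Fin d, (d : ℝ)⁻¹ = 1 := by
    simp [Finset.sum_const]
    field_simp
  have hgm : ∏ i, (hherm.eigenvalues i) ^ ((d : ℝ)⁻¹) ≤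
      ∑ i, (d : ℝ)⁻¹ * hherm.eigenvalues i :=
    Real.geom_mean_le_arith_mean_weighted Finset.univ _ _
      (fun i _ => by positivity) hw (fun i _ => hev i)
  have hsum_le : ∑ i, (d : ℝ)⁻¹ * hherm.eigenvalues i ≤ L ^ 2 := by
    rw [← Finset.mul_sum, ← htr2]
    rw [inv_mul_le_iff₀ hd0]
    calc S.trace ≤ (d:ℝ) * L ^ 2 := htrace_le
      _ = (d:ℝ) * L^2 := rfl
  have hprod : ∏ i, hherm.eigenvalues i = (∏ i, (hherm.eigenvalues i) ^ ((d:ℝ)⁻¹)) ^ d := by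
    rw [← Finset.prod_pow]
    refine Finset.prod_congr rfl fun i _ => ?_
    rw [← Real.rpow_natCast ((hherm.eigenvalues i) ^ ((d:ℝ)⁻¹)) d, ← Real.rpow_mul (hev i)]
    rw [inv_mul_cancel₀ (ne_of_gt hd0), Real.rpow_one]
  have hfin : A.det ^ 2 ≤ (L ^ 2) ^ d := by
    rw [← hdet, hdet2, hprod]
    have h0 : (0:ℝ) ≤ ∏ i, (hherm.eigenvalues i) ^ ((d:ℝ)⁻¹) :=
      Finset.prod_nonneg fun i _ => Real.rpow_nonneg (hev i) _
    exact pow_le_pow_left₀ h0 (hgm.trans hsum_le) d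
  have : |A.det| = Real.sqrt (A.det ^ 2) := (Real.sqrt_sq_eq_abs _).symm
  rw [this]
  rw [show (L:ℝ) ^ d = Real.sqrt ((L ^ d) ^ 2) from (Real.sqrt_sq (by positivity)).symm]
  apply Real.sqrt_le_sqrt
  calc A.det ^ 2 ≤ (L ^ 2) ^ d := hfin
    _ = (L ^ d) ^ 2 := by ring


lemma row_bound {d n : ℕ} {L : ℝ} {x : (Fin d → ℝ) → Fin n → ℝ} (hL : 0 ≤ L)
    (hx : EuclidLip L x) (k : Fin n) (s : Fin d → ℝ) :
    ∑ j, (fderiv ℝ (fun t => x t k) s (Pi.single j 1)) ^ 2 ≤ L ^ 2 := by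
  classical
  by_cases hdiff : DifferentiableAt ℝ (fun t => x t k) s
  swap
  · rw [fderiv_zero_of_not_differentiableAt hdiff]
    simpa using sq_nonneg L
  set D := fderiv ℝ (fun t => x t k) s with hD
  set e : EuclideanSpace ℝ (Fin d) ≃L[ℝ] (Fin d → ℝ) := PiLp.continuousLinearEquiv 2 ℝ _ with he
  set F : EuclideanSpace ℝ (Fin d) → ℝ := fun u => x (e u) k with hF
  have hlip : LipschitzWith L.toNNReal F := by
    apply LipschitzWith.of_dist_le_mul
    intro u v
    have h1 : dist (F u) (F v) = |x (e u) k - x (e v) k| := Real.dist_eq _ _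
    have h2 : |x (e u) k - x (e v) k| ≤ Real.sqrt (∑ k', (x (e u) k' - x (e v) k') ^ 2) := by
      rw [← Real.sqrt_sq_eq_abs]
      apply Real.sqrt_le_sqrt
      exact Finset.single_le_sum (f := fun k' => (x (e u) k' - x (e v) k') ^ 2)
        (fun i _ => sq_nonneg _) (Finset.mem_univ k)
    have h3 : dist u v = Real.sqrt (∑ j, ((e u) j - (e v) j) ^ 2) := by
      rw [EuclideanSpace.dist_eq]
      congr 1
      refine Finset.sum_congr rfl fun j _ => ?_
      rw [Real.dist_eq, sq_abs]
      rfl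
    rw [h1, Real.coe_toNNReal _ hL, h3]
    exact h2.trans (hx (e u) (e v))
  have heFD : HasFDerivAt F (D.comp (e : EuclideanSpace ℝ (Fin d) →L[ℝ] (Fin d → ℝ)))
      (e.symm s) := by
    have h1 : HasFDerivAt (fun t => x t k) D (e (e.symm s)) := by
      rw [e.apply_symm_apply]; exact hdiff.hasFDerivAt
    exact h1.comp (e.symm s) (e.hasFDerivAt)
  have hnorm : ‖D.comp (e : EuclideanSpace ℝ (Fin d) →L[ℝ] (Fin d → ℝ))‖ ≤ L := by
    have := heFD.le_of_lipschitz hlip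
    rwa [Real.coe_toNNReal _ hL] at this
  set g : Fin d → ℝ := fun j => D (Pi.single j 1) with hg
  set w : EuclideanSpace ℝ (Fin d) := e.symm g with hw
  have hDg : D g = ∑ j, g j ^ 2 := by
    conv_lhs => rw [show g = ∑ j, Pi.single j (g j) from (Finset.univ_sum_single g).symm]
    rw [map_sum]
    refine Finset.sum_congr rfl fun j _ => ?_
    have : (Pi.single j (g j) : Fin d → ℝ) = g j • (Pi.single j 1 : Fin d → ℝ) := by
      rw [← Pi.single_smul, smul_eq_mul, mul_one]
    rw [this, D.map_smul, smul_eq_mul, sq]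
  have hval : (D.comp (e : EuclideanSpace ℝ (Fin d) →L[ℝ] (Fin d → ℝ))) w = ∑ j, g j ^ 2 := by
    rw [ContinuousLinearMap.comp_apply]
    have : (e : EuclideanSpace ℝ (Fin d) →L[ℝ] (Fin d → ℝ)) w = g := by
      show e w = g
      rw [hw, e.apply_symm_apply]
    rw [this, hDg]
  have hnw : ‖w‖ = Real.sqrt (∑ j, g j ^ 2) := by
    rw [EuclideanSpace.norm_eq]
    congr 1
    refine Finset.sum_congr rfl fun j _ => ?_
    rw [Real.norm_eq_abs, sq_abs]
    rfl
  set Ss := ∑ j, g j ^ 2 with hSs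
  have hS0 : 0 ≤ Ss := Finset.sum_nonneg fun j _ => sq_nonneg _
  have hkey : Ss ≤ L * Real.sqrt Ss := by
    calc Ss = (D.comp (e : EuclideanSpace ℝ (Fin d) →L[ℝ] (Fin d → ℝ))) w := hval.symm
      _ ≤ |(D.comp (e : EuclideanSpace ℝ (Fin d) →L[ℝ] (Fin d → ℝ))) w| := le_abs_self _
      _ ≤ ‖D.comp (e : EuclideanSpace ℝ (Fin d) →L[ℝ] (Fin d → ℝ))‖ * ‖w‖ :=
          (D.comp _).le_opNorm w
      _ ≤ L * Real.sqrt Ss := by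
          rw [hnw]
          exact mul_le_mul_of_nonneg_right hnorm (Real.sqrt_nonneg _)
  have hsqrt := Real.sq_sqrt hS0
  nlinarith [Real.sqrt_nonneg Ss, sq_nonneg (L - Real.sqrt Ss)]


lemma permSimplex_measurableSet {m : ℕ} (π : Equiv.Perm (Fin m)) :
    MeasurableSet (permSimplex π (0:ℝ) 1) := by
  have heq : permSimplex π (0:ℝ) 1 =
      (Set.pi Set.univ fun _ : Fin m => Set.Icc (0:ℝ) 1) ∩
      ⋂ p : Fin m × Fin m, {u : Fin m → ℝ | p.1 < p.2 → u (π p.1) < u (π p.2)} := by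
    ext u
    simp only [permSimplex, Set.mem_setOf_eq, Set.mem_inter_iff, Set.mem_pi, Set.mem_univ,
      true_implies, Set.mem_iInter]
    constructor
    · rintro ⟨h1, h2⟩
      exact ⟨h1, fun p hp => h2 hp⟩
    · rintro ⟨h1, h2⟩
      exact ⟨h1, fun a b hab => h2 (a, b) hab⟩
  rw [heq]
  refine (MeasurableSet.pi Set.countable_univ fun _ _ => measurableSet_Icc).inter
    (MeasurableSet.iInter fun p => ?_)
  by_cases hp : p.1 < p.2
  · simp only [hp, true_implies]
    exact measurableSet_lt (measurable_pi_apply _) (measurable_pi_apply _)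
  · simp only [hp, false_implies]
    simp [Set.setOf_true]

lemma volume_permSimplex_eq {m : ℕ} (π : Equiv.Perm (Fin m)) :
    volume (permSimplex π (0:ℝ) 1) = volume (permSimplex (1 : Equiv.Perm (Fin m)) (0:ℝ) 1) := by
  have hmp := volume_preserving_arrowCongr' (α₁ := Fin m) (β₁ := ℝ)
    π.symm (MeasurableEquiv.refl ℝ) (MeasurePreserving.id _)
  have hpre : (MeasurableEquiv.arrowCongr' (π.symm : Fin m ≃ Fin m)
      (MeasurableEquiv.refl ℝ)) ⁻¹' (permSimplex 1 (0:ℝ) 1) = permSimplex π 0 1 := by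
    ext f
    have happ : ∀ i, (MeasurableEquiv.arrowCongr' (π.symm : Fin m ≃ Fin m)
        (MeasurableEquiv.refl ℝ)) f i = f (π i) := by
      intro i
      simp [MeasurableEquiv.arrowCongr', Equiv.arrowCongr', Equiv.arrowCongr]
    simp only [Set.mem_preimage, permSimplex, Set.mem_setOf_eq, happ, Equiv.Perm.coe_one, id_eq]
    constructor
    · rintro ⟨h1, h2⟩
      refine ⟨fun i => ?_, h2⟩
      have := h1 (π.symm i)
      rwa [Equiv.apply_symm_apply] at this
    · rintro ⟨h1, h2⟩
      exact ⟨fun i => h1 _, h2⟩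
  rw [← hpre, hmp.measure_preimage (permSimplex_measurableSet 1).nullMeasurableSet]

lemma volume_permSimplex_le {m : ℕ} (π : Equiv.Perm (Fin m)) :
    volume (permSimplex π (0:ℝ) 1) ≤ ((m.factorial : ℝ≥0∞))⁻¹ := by
  have hdisj : Pairwise (Function.onFun Disjoint
      fun σ : Equiv.Perm (Fin m) => permSimplex σ (0:ℝ) 1) := by
    intro σ τ hne
    rw [Function.onFun, Set.disjoint_left]
    rintro u ⟨h1, h2⟩ ⟨h3, h4⟩
    apply hne
    have hrange : Set.range (fun i => u (σ i)) = Set.range (fun i => u (τ i)) := by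
      have r1 : Set.range (fun i => u (σ i)) = Set.range u :=
        Function.Surjective.range_comp σ.surjective u
      have r2 : Set.range (fun i => u (τ i)) = Set.range u :=
        Function.Surjective.range_comp τ.surjective u
      rw [r1, r2]
    haveI : WellFoundedLT (Fin m) := inferInstance
    have heq : (fun i => u (σ i)) = fun i => u (τ i) := (h2.range_inj h4).1 hrange
    have huinj : Function.Injective u := by
      intro a b hab
      have h5 : (fun i => u (σ i)) (σ.symm a) = (fun i => u (σ i)) (σ.symm b) := by
        simp only [Equiv.apply_symm_apply]; exact hab
      exact σ.symm.injective (h2.injective h5)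
    apply Equiv.ext
    intro i
    exact huinj (congrFun heq i)
  have hcube : ∀ σ : Equiv.Perm (Fin m), permSimplex σ (0:ℝ) 1 ⊆
      Set.pi Set.univ fun _ : Fin m => Set.Icc (0:ℝ) 1 := by
    intro σ u hu i _
    exact hu.1 i
  have hsum : ∑ σ : Equiv.Perm (Fin m), volume (permSimplex σ (0:ℝ) 1) ≤ 1 := by
    rw [← tsum_fintype (L := SummationFilter.unconditional _)]
    rw [← measure_iUnion hdisj fun σ => permSimplex_measurableSet σ]
    calc volume (⋃ σ : Equiv.Perm (Fin m), permSimplex σ (0:ℝ) 1) ≤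
        volume (Set.pi Set.univ fun _ : Fin m => Set.Icc (0:ℝ) 1) :=
          measure_mono (Set.iUnion_subset hcube)
      _ = 1 := by rw [volume_pi_pi]; simp [Real.volume_Icc]
  have hconst : ∑ σ : Equiv.Perm (Fin m), volume (permSimplex σ (0:ℝ) 1) =
      (m.factorial : ℝ≥0∞) * volume (permSimplex π (0:ℝ) 1) := by
    have : ∀ σ : Equiv.Perm (Fin m), volume (permSimplex σ (0:ℝ) 1) =
        volume (permSimplex π (0:ℝ) 1) := by
      intro σ; rw [volume_permSimplex_eq σ, volume_permSimplex_eq π]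
    simp only [this, Finset.sum_const, Finset.card_univ, Fintype.card_perm, Fintype.card_fin, nsmul_eq_mul]
  rw [hconst] at hsum
  rw [ENNReal.le_inv_iff_mul_le, mul_comm]
  exact hsum


lemma transpose_measurePreserving (m d : ℕ) :
    MeasurePreserving (fun (y : Fin d → Fin m → ℝ) (i : Fin m) (j : Fin d) => y j i)
      volume volume := by
  set Tr : (Fin d → Fin m → ℝ) → (Fin m → Fin d → ℝ) := fun y i j => y j i with hTr
  have hmeas : Measurable Tr :=
    measurable_pi_lambda _ fun i => measurable_pi_lambda _ fun j =>
      (measurable_pi_apply i).comp (measurable_pi_apply j)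
  refine ⟨hmeas, ?_⟩
  have key : Measure.pi (fun _ : Fin m => (volume : Measure (Fin d → ℝ))) =
      Measure.map Tr volume := by
    refine Measure.pi_eq_generateFrom (C := fun _ =>
        Set.pi Set.univ '' Set.pi Set.univ fun _ : Fin d => {s : Set ℝ | MeasurableSet s})
      (fun _ => generateFrom_pi) (fun _ => isPiSystem_pi)
      (fun _ => ?_) (fun s hs => ?_)
    · exact (Measure.FiniteSpanningSetsIn.pi fun _ => (volume : Measure ℝ).toFiniteSpanningSetsIn)
    · choose E hE1 hE2 using hs
      have hEmeas : ∀ i j, MeasurableSet (E i j) := by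
        intro i j
        exact hE1 i j (Set.mem_univ j)
      have hsmeas : ∀ i, MeasurableSet (s i) := by
        intro i
        rw [← hE2 i]
        exact MeasurableSet.pi Set.countable_univ fun j _ => hEmeas i j
      rw [Measure.map_apply hmeas (MeasurableSet.pi Set.countable_univ fun i _ => hsmeas i)]
      have hpre : Tr ⁻¹' (Set.pi Set.univ s) =
          Set.pi Set.univ fun j : Fin d => Set.pi Set.univ fun i : Fin m => E i j := by
        ext y
        simp only [Set.mem_preimage, Set.mem_pi, Set.mem_univ, true_implies]
        constructor
        · intro h j i
          have hi := h i
          rw [← hE2 i, Set.mem_univ_pi] at hi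
          exact hi j
        · intro h i
          rw [← hE2 i, Set.mem_univ_pi]
          intro j
          exact h j i
      rw [hpre, volume_pi_pi]
      have hcol : ∀ j, volume (Set.pi Set.univ fun i : Fin m => E i j) =
          ∏ i, volume (E i j) := fun j => volume_pi_pi _
      simp_rw [hcol]
      rw [Finset.prod_comm]
      refine Finset.prod_congr rfl fun i _ => ?_
      rw [← hE2 i, volume_pi_pi]
  rw [show (volume : Measure (Fin m → Fin d → ℝ)) =
    Measure.pi (fun _ : Fin m => (volume : Measure (Fin d → ℝ))) from rfl]
  exact key.symm


lemma intDomain_measurableSet {m d : ℕ} (π : Fin d → Equiv.Perm (Fin m)) :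
    MeasurableSet (intDomain π (fun _ => (0:ℝ)) fun _ => 1) := by
  have heq : intDomain π (fun _ => (0:ℝ)) (fun _ => 1) =
      ⋂ j : Fin d, (fun (t : Fin m → Fin d → ℝ) (i : Fin m) => t i j) ⁻¹'
        (permSimplex (π j) 0 1) := by
    ext t
    simp [intDomain, Set.mem_iInter]
  rw [heq]
  refine MeasurableSet.iInter fun j => ?_
  have hcol : Measurable fun (t : Fin m → Fin d → ℝ) (i : Fin m) => t i j :=
    measurable_pi_lambda _ fun i => (measurable_pi_apply j).comp (measurable_pi_apply i)
  exact hcol (permSimplex_measurableSet (π j))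

lemma volume_intDomain_le {m d : ℕ} (π : Fin d → Equiv.Perm (Fin m)) :
    volume (intDomain π (fun _ => (0:ℝ)) fun _ => 1) ≤ ((m.factorial : ℝ≥0∞))⁻¹ ^ d := by
  have hmp := transpose_measurePreserving m d
  have hpre : (fun (y : Fin d → Fin m → ℝ) (i : Fin m) (j : Fin d) => y j i) ⁻¹'
      (intDomain π (fun _ => (0:ℝ)) fun _ => 1) =
      Set.pi Set.univ fun j : Fin d => permSimplex (π j) 0 1 := by
    ext y
    simp only [Set.mem_preimage, intDomain, Set.mem_setOf_eq, Set.mem_pi, Set.mem_univ,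
      true_implies]
  rw [← hmp.measure_preimage (intDomain_measurableSet π).nullMeasurableSet, hpre, volume_pi_pi]
  calc ∏ j, volume (permSimplex (π j) (0:ℝ) 1) ≤
      ∏ _j : Fin d, ((m.factorial : ℝ≥0∞))⁻¹ :=
        Finset.prod_le_prod' fun j _ => volume_permSimplex_le (π j)
    _ = ((m.factorial : ℝ≥0∞))⁻¹ ^ d := by
        rw [Finset.prod_const, Finset.card_univ, Fintype.card_fin]

lemma abs_jacobianMinor_le {d n : ℕ} {L : ℝ} {x : (Fin d → ℝ) → Fin n → ℝ} (hd : 1 ≤ d)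
    (hL : 0 ≤ L) (hx : EuclidLip L x) (P : Fin d → Fin n) (s : Fin d → ℝ) :
    |jacobianMinor x P s| ≤ L ^ d := by
  exact abs_det_le_of_rows d hd _ L hL fun i => row_bound hL hx (P i) s

lemma abs_msMonomial_le {d n m : ℕ} {L : ℝ} {x : (Fin d → ℝ) → Fin n → ℝ} (hd : 1 ≤ d)
    (hL : 0 ≤ L) (hx : EuclidLip L x) (P : Fin m → Fin d → Fin n)
    (π : Fin d → Equiv.Perm (Fin m)) :
    |msMonomial x P π| ≤ (L ^ d) ^ m * ((m.factorial : ℝ)⁻¹) ^ d := by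
  have hvol := volume_intDomain_le π
  have hne : ((m.factorial : ℝ≥0∞))⁻¹ ^ d ≠ ∞ := by
    apply ENNReal.pow_ne_top
    simp [ENNReal.inv_ne_top, Nat.factorial_ne_zero]
  have hfin : volume (intDomain π (fun _ => (0:ℝ)) fun _ => 1) < ∞ :=
    lt_of_le_of_lt hvol (lt_of_le_of_ne le_top hne)
  have hpt : ∀ t ∈ intDomain π (fun _ => (0:ℝ)) fun _ => 1,
      ‖∏ i, jacobianMinor x (P i) (t i)‖ ≤ (L ^ d) ^ m := by
    intro t _
    rw [Real.norm_eq_abs, Finset.abs_prod]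
    calc ∏ i, |jacobianMinor x (P i) (t i)| ≤ ∏ _i : Fin m, L ^ d :=
        Finset.prod_le_prod (fun i _ => abs_nonneg _)
          (fun i _ => abs_jacobianMinor_le hd hL hx (P i) (t i))
      _ = (L ^ d) ^ m := by rw [Finset.prod_const, Finset.card_univ, Fintype.card_fin]
  have hmain := norm_setIntegral_le_of_norm_le_const hfin hpt
  rw [Real.norm_eq_abs] at hmain
  have htoReal : (volume (intDomain π (fun _ => (0:ℝ)) fun _ => 1)).toReal ≤
      ((m.factorial : ℝ)⁻¹) ^ d := by
    have h1 := ENNReal.toReal_mono hne hvol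
    simpa [ENNReal.toReal_pow, ENNReal.toReal_inv] using h1
  calc |msMonomial x P π| ≤
      (L ^ d) ^ m * (volume (intDomain π (fun _ => (0:ℝ)) fun _ => 1)).toReal := hmain
    _ ≤ (L ^ d) ^ m * ((m.factorial : ℝ)⁻¹) ^ d :=
        mul_le_mul_of_nonneg_left htoReal (by positivity)

lemma card_strictMono_le (d n : ℕ) :
    Fintype.card {f : Fin d → Fin n // StrictMono f} ≤ n.choose d := by
  classical
  have hinj : Function.Injective
      (fun f : {f : Fin d → Fin n // StrictMono f} =>
        (⟨Finset.image f.1 Finset.univ, by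
          rw [Finset.mem_powersetCard]
          exact ⟨Finset.subset_univ _,
            by rw [Finset.card_image_of_injective _ f.2.injective, Finset.card_univ,
              Fintype.card_fin]⟩⟩ :
          ↥(Finset.powersetCard d (Finset.univ : Finset (Fin n))))) := by
    intro f g hfg
    have himg : Finset.image f.1 Finset.univ = Finset.image g.1 Finset.univ := by
      simpa using congrArg Subtype.val hfg
    have hrange : Set.range f.1 = Set.range g.1 := by
      have h1 : (↑(Finset.image f.1 Finset.univ) : Set (Fin n)) = Set.range f.1 := by
        simp [Finset.coe_image, Set.image_univ]
      have h2 : (↑(Finset.image g.1 Finset.univ) : Set (Fin n)) = Set.range g.1 := by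
        simp [Finset.coe_image, Set.image_univ]
      rw [← h1, ← h2, himg]
    haveI : WellFoundedLT (Fin d) := inferInstance
    exact Subtype.ext ((f.2.range_inj g.2).1 hrange)
  calc Fintype.card {f : Fin d → Fin n // StrictMono f} ≤
      Fintype.card ↥(Finset.powersetCard d (Finset.univ : Finset (Fin n))) :=
        Fintype.card_le_of_injective _ hinj
    _ = (Finset.powersetCard d (Finset.univ : Finset (Fin n))).card := Fintype.card_coe _
    _ = n.choose d := by rw [Finset.card_powersetCard, Finset.card_univ, Fintype.card_fin]

lemma levelSum_le {d n : ℕ} {L : ℝ} {x : (Fin d → ℝ) → Fin n → ℝ} (hd : 1 ≤ d)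
    (hL : 0 ≤ L) (hx : EuclidLip L x) (m : ℕ) :
    levelSum d n m x ≤ (n.choose d : ℝ) ^ m * L ^ (2 * d * m) / (m.factorial : ℝ) ^ d := by
  classical
  set B : ℝ := (L ^ d) ^ m * ((m.factorial : ℝ)⁻¹) ^ d with hB
  have hB0 : 0 ≤ B := by positivity
  have hsq : ∀ (P : Fin m → Fin d → Fin n) (π : Fin d → Equiv.Perm (Fin m)),
      (msMonomial x P π) ^ 2 ≤ B ^ 2 := by
    intro P π
    rw [← sq_abs]
    exact pow_le_pow_left₀ (abs_nonneg _) (abs_msMonomial_le hd hL hx P π) 2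
  have hcard : (Finset.univ.filter
      (fun P : Fin m → Fin d → Fin n => ∀ i, StrictMono (P i))).card ≤ (n.choose d) ^ m := by
    have h1 : (Finset.univ.filter
        (fun P : Fin m → Fin d → Fin n => ∀ i, StrictMono (P i))).card =
        Fintype.card {P : Fin m → Fin d → Fin n // ∀ i, StrictMono (P i)} :=
      (Fintype.card_subtype _).symm
    rw [h1]
    have h2 : Fintype.card {P : Fin m → Fin d → Fin n // ∀ i, StrictMono (P i)} =
        Fintype.card (Fin m → {f : Fin d → Fin n // StrictMono f}) :=
      Fintype.card_congr (Equiv.subtypePiEquivPi)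
    rw [h2, Fintype.card_fun, Fintype.card_fin]
    exact Nat.pow_le_pow_left (card_strictMono_le d n) m
  have hmain : levelSum d n m x ≤
      ((n.choose d : ℝ) ^ m) * ((m.factorial : ℝ) ^ d) * B ^ 2 := by
    unfold levelSum
    calc ∑ P ∈ Finset.univ.filter (fun P : Fin m → Fin d → Fin n => ∀ i, StrictMono (P i)),
          ∑ π : Fin d → Equiv.Perm (Fin m), (msMonomial x P π) ^ 2 ≤
        ∑ P ∈ Finset.univ.filter (fun P : Fin m → Fin d → Fin n => ∀ i, StrictMono (P i)),
          ∑ _π : Fin d → Equiv.Perm (Fin m), B ^ 2 := by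
          refine Finset.sum_le_sum fun P _ => Finset.sum_le_sum fun π _ => hsq P π
      _ = ((Finset.univ.filter
            (fun P : Fin m → Fin d → Fin n => ∀ i, StrictMono (P i))).card : ℝ) *
            ((m.factorial : ℝ) ^ d) * B ^ 2 := by
          rw [Finset.sum_const, Finset.sum_const, Finset.card_univ]
          have : Fintype.card (Fin d → Equiv.Perm (Fin m)) = m.factorial ^ d := by
            rw [Fintype.card_fun, Fintype.card_perm, Fintype.card_fin, Fintype.card_fin]
          rw [this]
          push_cast
          ring_nf
      _ ≤ ((n.choose d : ℝ) ^ m) * ((m.factorial : ℝ) ^ d) * B ^ 2 := by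
          have hc : ((Finset.univ.filter
              (fun P : Fin m → Fin d → Fin n => ∀ i, StrictMono (P i))).card : ℝ) ≤
              (n.choose d : ℝ) ^ m := by exact_mod_cast hcard
          have h2 : (0:ℝ) ≤ ((m.factorial : ℝ) ^ d) * B ^ 2 := by positivity
          calc _ = ((Finset.univ.filter
              (fun P : Fin m → Fin d → Fin n => ∀ i, StrictMono (P i))).card : ℝ) *
              (((m.factorial : ℝ) ^ d) * B ^ 2) := by ring
            _ ≤ ((n.choose d : ℝ) ^ m) * (((m.factorial : ℝ) ^ d) * B ^ 2) :=
              mul_le_mul_of_nonneg_right hc h2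
            _ = _ := by ring
  refine hmain.trans (le_of_eq ?_)
  have hfac : (m.factorial : ℝ) ≠ 0 := by exact_mod_cast m.factorial_ne_zero
  rw [hB]
  have hLpow : ((L ^ d) ^ m) ^ 2 = L ^ (2 * d * m) := by
    rw [← pow_mul, ← pow_mul]
    ring_nf
  rw [← hLpow, inv_pow]
  field_simp

/-- the squared Hilbert norm of the mapping space signature of an
`L`-Lipschitz map is finite, bounded by the convergent series
`Σ_m binom(n,d)^m L^{2dm}/(m!)^d`. -/

theorem stmt6 (d n : ℕ) (hd : 1 ≤ d) (hn : d ≤ n) (L : ℝ)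
    (x : (Fin d → ℝ) → Fin n → ℝ) (hx : EuclidLip L x) :
    Summable (fun m : ℕ => levelSum d n (m + 1) x) ∧
    Summable (fun m : ℕ =>
      (n.choose d : ℝ) ^ m * L ^ (2 * d * m) / (Nat.factorial m : ℝ) ^ d) ∧
    1 + ∑' m : ℕ, levelSum d n (m + 1) x ≤
      ∑' m : ℕ, (n.choose d : ℝ) ^ m * L ^ (2 * d * m) / (Nat.factorial m : ℝ) ^ d := by
  classical
  have hL : 0 ≤ L := by
    have i0 : Fin d := ⟨0, hd⟩
    have h := hx (Pi.single i0 1) 0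
    have h1 : Real.sqrt (∑ j, ((Pi.single i0 1 : Fin d → ℝ) j - (0 : Fin d → ℝ) j) ^ 2) = 1 := by
      have h2 : ∑ j, ((Pi.single i0 1 : Fin d → ℝ) j - (0 : Fin d → ℝ) j) ^ 2 = 1 := by
        simp [Pi.single_apply]
      rw [h2, Real.sqrt_one]
    rw [h1, mul_one] at h
    exact le_trans (Real.sqrt_nonneg _) h
  set a : ℕ → ℝ := fun m => (n.choose d : ℝ) ^ m * L ^ (2 * d * m) / (m.factorial : ℝ) ^ d
    with ha
  have ha0 : ∀ m, 0 ≤ a m := fun m =>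
    div_nonneg (mul_nonneg (pow_nonneg (by positivity) m) (pow_nonneg hL _))
      (pow_nonneg (by positivity) d)
  have hSa : Summable a := by
    refine Summable.of_nonneg_of_le ha0 (fun m => ?_)
      (Real.summable_pow_div_factorial ((n.choose d : ℝ) * L ^ (2 * d)))
    have h1 : a m = ((n.choose d : ℝ) * L ^ (2 * d)) ^ m / (m.factorial : ℝ) ^ d := by
      rw [ha, mul_pow, ← pow_mul, mul_assoc]
      simp [mul_assoc]
    rw [h1]
    have hnum : 0 ≤ ((n.choose d : ℝ) * L ^ (2 * d)) ^ m :=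
      pow_nonneg (mul_nonneg (by positivity) (pow_nonneg hL _)) m
    have hfac1 : (1:ℝ) ≤ (m.factorial : ℝ) := by exact_mod_cast m.factorial_pos
    have hden : (m.factorial : ℝ) ≤ (m.factorial : ℝ) ^ d := by
      calc (m.factorial : ℝ) = (m.factorial : ℝ) ^ 1 := (pow_one _).symm
        _ ≤ (m.factorial : ℝ) ^ d := pow_le_pow_right₀ hfac1 hd
    exact div_le_div_of_nonneg_left hnum (by positivity) hden
  have hlevel_le : ∀ m, levelSum d n (m + 1) x ≤ a (m + 1) := fun m =>
    levelSum_le hd hL hx (m + 1)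
  have hlevel0 : ∀ m, 0 ≤ levelSum d n (m + 1) x := by
    intro m
    unfold levelSum
    exact Finset.sum_nonneg fun P _ => Finset.sum_nonneg fun π _ => sq_nonneg _
  have hSshift : Summable fun m => a (m + 1) := (summable_nat_add_iff 1).mpr hSa
  have hS1 : Summable fun m => levelSum d n (m + 1) x :=
    Summable.of_nonneg_of_le hlevel0 hlevel_le hSshift
  refine ⟨hS1, hSa, ?_⟩
  have ha00 : a 0 = 1 := by simp [ha]
  calc 1 + ∑' m, levelSum d n (m + 1) x ≤ 1 + ∑' m, a (m + 1) :=
      add_le_add_right (Summable.tsum_le_tsum hlevel_le hS1 hSshift) 1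
    _ = a 0 + ∑' m, a (m + 1) := by rw [ha00]
    _ = ∑' m, a m := (hSa.tsum_eq_zero_add).symm


end
end

section
/- Let x, y ∈ Lip(□^d, ℝ^n) and L, ε > 0 satisfy ‖d̂x‖_∞ ≤ L, ‖d̂y‖_∞ ≤ L, and μ_∞(x,y) ≤ ε. Then for every m ≥ 1 and every level-m index (P,π) ∈ O_{d,n}^m × Σ_m^d, |Φ_m^{P,π}(x) − Φ_m^{P,π}(y)| ≤ m · L^{m−1} · ε / (m!)^d. -/
open MeasureTheory

open scoped Classical

noncomputable section

/-- The Jacobian Lipschitz norm `‖d̂x‖_∞ = ess sup_s (Σ_{P ∈ O_{d,n}} J[x_P](s)²)^{1/2}`. -/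
def jacNorm (d n : ℕ) (x : (Fin d → ℝ) → Fin n → ℝ) : ℝ :=
  essSup (fun s => Real.sqrt
      (∑ P ∈ Finset.univ.filter (fun P : Fin d → Fin n => StrictMono P),
        (jacobianMinor x P s) ^ 2))
    (volume.restrict (unitCube d))

/-- The Jacobian Lipschitz metric `μ_∞(x,y)`. -/
def muInfty (d n : ℕ) (x y : (Fin d → ℝ) → Fin n → ℝ) : ℝ :=
  essSup (fun s => Real.sqrt
      (∑ P ∈ Finset.univ.filter (fun P : Fin d → Fin n => StrictMono P),
        (jacobianMinor x P s - jacobianMinor y P s) ^ 2))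
    (volume.restrict (unitCube d))

open scoped ENNReal

lemma abs_le_sqrt_sum {ι : Type*} {s : Finset ι} {i : ι} (hi : i ∈ s) (f : ι → ℝ) :
    |f i| ≤ Real.sqrt (∑ j ∈ s, f j ^ 2) := by
  rw [← Real.sqrt_sq_eq_abs]
  exact Real.sqrt_le_sqrt (Finset.single_le_sum (fun j _ => sq_nonneg (f j)) hi)

lemma abs_prod_sub_prod_le {ι : Type*} (s : Finset ι) (f g : ι → ℝ) {L ε : ℝ}
    (hL : 0 ≤ L) (hε : 0 ≤ ε) (hf : ∀ i ∈ s, |f i| ≤ L) (hg : ∀ i ∈ s, |g i| ≤ L)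
    (hfg : ∀ i ∈ s, |f i - g i| ≤ ε) :
    |∏ i ∈ s, f i - ∏ i ∈ s, g i| ≤ s.card * ε * L ^ (s.card - 1) := by
  classical
  revert hf hg hfg
  induction s using Finset.induction_on with
  | empty => intro _ _ _; simp
  | @insert a s ha IH =>
    intro hf hg hfg
    have hf' : ∀ i ∈ s, |f i| ≤ L := fun i hi => hf i (Finset.mem_insert_of_mem hi)
    have hg' : ∀ i ∈ s, |g i| ≤ L := fun i hi => hg i (Finset.mem_insert_of_mem hi)
    have hfg' : ∀ i ∈ s, |f i - g i| ≤ ε := fun i hi => hfg i (Finset.mem_insert_of_mem hi)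
    have hIH := IH hf' hg' hfg'
    set k := s.card with hk
    have hA : |∏ i ∈ s, f i| ≤ L ^ k := by
      rw [Finset.abs_prod]
      calc ∏ i ∈ s, |f i| ≤ ∏ _i ∈ s, L :=
            Finset.prod_le_prod (fun i _ => abs_nonneg _) (fun i hi => hf' i hi)
        _ = L ^ k := by rw [Finset.prod_const]
    rw [Finset.prod_insert ha, Finset.prod_insert ha, Finset.card_insert_of_notMem ha]
    have key : f a * ∏ i ∈ s, f i - g a * ∏ i ∈ s, g i
        = (f a - g a) * ∏ i ∈ s, f i + g a * (∏ i ∈ s, f i - ∏ i ∈ s, g i) := by ring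
    rw [key]
    have h1 : |(f a - g a) * ∏ i ∈ s, f i| ≤ ε * L ^ k := by
      rw [abs_mul]
      exact mul_le_mul (hfg a (Finset.mem_insert_self a s)) hA (abs_nonneg _) hε
    have h2 : |g a * (∏ i ∈ s, f i - ∏ i ∈ s, g i)| ≤ L * (k * ε * L ^ (k - 1)) := by
      rw [abs_mul]
      exact mul_le_mul (hg a (Finset.mem_insert_self a s)) hIH (abs_nonneg _) hL
    have h3 : L * (k * ε * L ^ (k - 1)) ≤ k * ε * L ^ k := by
      rcases Nat.eq_zero_or_pos k with hk0 | hk0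
      · simp [hk0]
      · have h4 : L * L ^ (k - 1) = L ^ k := by
          rw [← pow_succ']
          congr 1
          omega
        rw [show L * (↑k * ε * L ^ (k - 1)) = ↑k * ε * (L * L ^ (k - 1)) from by ring, h4]
    calc |(f a - g a) * ∏ i ∈ s, f i + g a * (∏ i ∈ s, f i - ∏ i ∈ s, g i)|
        ≤ |(f a - g a) * ∏ i ∈ s, f i| + |g a * (∏ i ∈ s, f i - ∏ i ∈ s, g i)| := abs_add_le _ _
      _ ≤ ε * L ^ k + k * ε * L ^ k := add_le_add h1 (h2.trans h3)
      _ = (k + 1 : ℕ) * ε * L ^ ((k + 1) - 1) := by rw [Nat.add_sub_cancel]; push_cast; ring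

lemma measurable_jacobianMinor {d n : ℕ} (x : (Fin d → ℝ) → Fin n → ℝ) (P : Fin d → Fin n) :
    Measurable (jacobianMinor x P) := by
  have : jacobianMinor x P = fun s => ∑ σ : Equiv.Perm (Fin d),
      ((Equiv.Perm.sign σ : ℤ) : ℝ) *
        ∏ i, fderiv ℝ (fun t => x t (P (σ i))) s (Pi.single i 1) := by
    funext s
    rw [jacobianMinor, Matrix.det_apply']
    rfl
  rw [this]
  exact Finset.measurable_sum _ fun σ _ =>
    (Finset.measurable_prod _ fun i _ =>
      (measurable_fderiv_apply_const ℝ _ _)).const_mul _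

lemma jacobianMinor_bound {d n : ℕ} {x : (Fin d → ℝ) → Fin n → ℝ} (hx : IsLipMap x) :
    ∃ M : ℝ, 0 ≤ M ∧ ∀ (P : Fin d → Fin n) (s : Fin d → ℝ), |jacobianMinor x P s| ≤ M := by
  obtain ⟨L', hL'⟩ := hx
  set K : ℝ := |L'| * Real.sqrt d with hK
  have hK0 : 0 ≤ K := mul_nonneg (abs_nonneg _) (Real.sqrt_nonneg _)
  have hfd : ∀ (k : Fin n) (s : Fin d → ℝ), ‖fderiv ℝ (fun t => x t k) s‖ ≤ K := by
    intro k s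
    apply norm_fderiv_le_of_lip' ℝ hK0
    filter_upwards with t
    have h1 : |x t k - x s k| ≤ Real.sqrt (∑ k', (x t k' - x s k') ^ 2) :=
      abs_le_sqrt_sum (Finset.mem_univ k) (fun k' => x t k' - x s k')
    have h2 := hL' t s
    have h4 : Real.sqrt (∑ j, (t j - s j) ^ 2) ≤ Real.sqrt d * ‖t - s‖ := by
      have hsum : (∑ j, (t j - s j) ^ 2) ≤ (d : ℝ) * ‖t - s‖ ^ 2 := by
        calc (∑ j, (t j - s j) ^ 2) ≤ ∑ _j : Fin d, ‖t - s‖ ^ 2 := by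
              refine Finset.sum_le_sum fun j _ => ?_
              have : |t j - s j| ≤ ‖t - s‖ := by
                have := norm_le_pi_norm (t - s) j
                simpa [Real.norm_eq_abs] using this
              calc (t j - s j) ^ 2 = |t j - s j| ^ 2 := (sq_abs _).symm
                _ ≤ ‖t - s‖ ^ 2 := by
                  exact pow_le_pow_left₀ (abs_nonneg _) this 2
          _ = (d : ℝ) * ‖t - s‖ ^ 2 := by
              rw [Finset.sum_const, Finset.card_univ, Fintype.card_fin, nsmul_eq_mul]
      calc Real.sqrt (∑ j, (t j - s j) ^ 2) ≤ Real.sqrt ((d : ℝ) * ‖t - s‖ ^ 2) :=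
            Real.sqrt_le_sqrt hsum
        _ = Real.sqrt d * ‖t - s‖ := by
            rw [Real.sqrt_mul (by positivity), Real.sqrt_sq (norm_nonneg _)]
    have hnn : (0:ℝ) ≤ Real.sqrt (∑ j, (t j - s j) ^ 2) := Real.sqrt_nonneg _
    calc ‖x t k - x s k‖ = |x t k - x s k| := rfl
      _ ≤ Real.sqrt (∑ k', (x t k' - x s k') ^ 2) := h1
      _ ≤ L' * Real.sqrt (∑ j, (t j - s j) ^ 2) := h2
      _ ≤ |L'| * Real.sqrt (∑ j, (t j - s j) ^ 2) :=
          mul_le_mul_of_nonneg_right (le_abs_self _) hnn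
      _ ≤ |L'| * (Real.sqrt d * ‖t - s‖) :=
          mul_le_mul_of_nonneg_left h4 (abs_nonneg _)
      _ = K * ‖t - s‖ := by rw [hK]; ring
  have hentry : ∀ (k : Fin n) (s : Fin d → ℝ) (j : Fin d),
      |fderiv ℝ (fun t => x t k) s (Pi.single j 1)| ≤ K := by
    intro k s j
    calc |fderiv ℝ (fun t => x t k) s (Pi.single j 1)|
        = ‖fderiv ℝ (fun t => x t k) s (Pi.single j 1)‖ := rfl
      _ ≤ ‖fderiv ℝ (fun t => x t k) s‖ := by
          refine ContinuousLinearMap.unit_le_opNorm _ _ ?_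
          have h := Pi.norm_single (G := fun _ : Fin d => ℝ) (i := j) (1:ℝ)
          rw [h, norm_one]
      _ ≤ K := hfd k s
  refine ⟨(d.factorial : ℝ) * K ^ d, by positivity, fun P s => ?_⟩
  rw [jacobianMinor, Matrix.det_apply']
  refine le_trans (Finset.abs_sum_le_sum_abs _ _) ?_
  have hterm : ∀ σ : Equiv.Perm (Fin d),
      |((Equiv.Perm.sign σ : ℤ) : ℝ) *
        ∏ i, Matrix.of (fun i j : Fin d => fderiv ℝ (fun t => x t (P i)) s (Pi.single j 1)) (σ i) i|
      ≤ K ^ d := by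
    intro σ
    have hsign : |((Equiv.Perm.sign σ : ℤ) : ℝ)| = 1 := by
      rcases Int.units_eq_one_or (Equiv.Perm.sign σ) with h | h <;> simp [h]
    rw [abs_mul, hsign, one_mul, Finset.abs_prod]
    calc (∏ i, |Matrix.of (fun i j : Fin d => fderiv ℝ (fun t => x t (P i)) s (Pi.single j 1)) (σ i) i|)
        ≤ ∏ _i : Fin d, K :=
          Finset.prod_le_prod (fun i _ => abs_nonneg _) (fun i _ => hentry (P (σ i)) s i)
      _ = K ^ d := by rw [Finset.prod_const, Finset.card_univ, Fintype.card_fin]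
  calc (∑ σ : Equiv.Perm (Fin d),
        |((Equiv.Perm.sign σ : ℤ) : ℝ) *
          ∏ i, Matrix.of (fun i j : Fin d => fderiv ℝ (fun t => x t (P i)) s (Pi.single j 1)) (σ i) i|)
      ≤ ∑ _σ : Equiv.Perm (Fin d), K ^ d := Finset.sum_le_sum fun σ _ => hterm σ
    _ = (d.factorial : ℝ) * K ^ d := by
        rw [Finset.sum_const, Finset.card_univ, Fintype.card_perm, Fintype.card_fin, nsmul_eq_mul]
lemma ae_abs_le_of_essSup_le {d n : ℕ} (F : (Fin d → Fin n) → (Fin d → ℝ) → ℝ) {M L : ℝ}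
    (hbd : ∀ P s, |F P s| ≤ M)
    (hess : essSup (fun s => Real.sqrt
        (∑ P ∈ Finset.univ.filter (fun P : Fin d → Fin n => StrictMono P), (F P s) ^ 2))
      (volume.restrict (unitCube d)) ≤ L) :
    ∀ᵐ s ∂(volume.restrict (unitCube d)),
      ∀ P : Fin d → Fin n, StrictMono P → |F P s| ≤ L := by
  set f : (Fin d → ℝ) → ℝ := fun s => Real.sqrt
      (∑ P ∈ Finset.univ.filter (fun P : Fin d → Fin n => StrictMono P), (F P s) ^ 2) with hf
  have hbdd : Filter.IsBoundedUnder (· ≤ ·) (ae (volume.restrict (unitCube d))) f := by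
    refine Filter.isBoundedUnder_of ⟨Real.sqrt
      ((Finset.univ.filter (fun P : Fin d → Fin n => StrictMono P)).card * M ^ 2), fun s => ?_⟩
    refine Real.sqrt_le_sqrt ?_
    calc (∑ P ∈ Finset.univ.filter (fun P : Fin d → Fin n => StrictMono P), (F P s) ^ 2)
        ≤ ∑ _P ∈ Finset.univ.filter (fun P : Fin d → Fin n => StrictMono P), M ^ 2 := by
          refine Finset.sum_le_sum fun P _ => ?_
          calc (F P s) ^ 2 = |F P s| ^ 2 := (sq_abs _).symm
            _ ≤ M ^ 2 := by
                have h0 : (0:ℝ) ≤ M := le_trans (abs_nonneg _) (hbd P s)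
                exact pow_le_pow_left₀ (abs_nonneg _) (hbd P s) 2
      _ = (Finset.univ.filter (fun P : Fin d → Fin n => StrictMono P)).card * M ^ 2 := by
          rw [Finset.sum_const, nsmul_eq_mul]
  have hae := ae_le_essSup (μ := volume.restrict (unitCube d)) (f := f) hbdd
  filter_upwards [hae] with s hs P hPm
  calc |F P s| ≤ f s := abs_le_sqrt_sum
        (Finset.mem_filter.mpr ⟨Finset.mem_univ _, hPm⟩) (fun P => F P s)
    _ ≤ essSup f (volume.restrict (unitCube d)) := hs
    _ ≤ L := hess

lemma measurableSet_permSimplex {m : ℕ} (π : Equiv.Perm (Fin m)) (a b : ℝ) :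
    MeasurableSet (permSimplex π a b) := by
  have heq : permSimplex π a b =
      (⋂ i, (fun u : Fin m → ℝ => u i) ⁻¹' Set.Icc a b) ∩
      ⋂ (i : Fin m), ⋂ (j : Fin m), {u : Fin m → ℝ | i < j → u (π i) < u (π j)} := by
    ext u
    simp only [permSimplex, Set.mem_setOf_eq, Set.mem_inter_iff, Set.mem_iInter,
      Set.mem_preimage]
    constructor
    · rintro ⟨h1, h2⟩
      exact ⟨fun i => h1 i, fun i j hij => h2 hij⟩
    · rintro ⟨h1, h2⟩
      exact ⟨fun i => h1 i, fun i j hij => h2 i j hij⟩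
  rw [heq]
  refine MeasurableSet.inter ?_ ?_
  · exact MeasurableSet.iInter fun i => (measurable_pi_apply i) measurableSet_Icc
  · refine MeasurableSet.iInter fun i => MeasurableSet.iInter fun j => ?_
    by_cases hij : i < j
    · simp only [hij, true_implies]
      exact measurableSet_lt (measurable_pi_apply _) (measurable_pi_apply _)
    · simp only [hij, false_implies]
      · simp only [Set.setOf_true]
        exact MeasurableSet.univ

lemma measurePreserving_comp_perm {m : ℕ} (σ : Equiv.Perm (Fin m)) :
    MeasurePreserving (fun u : Fin m → ℝ => u ∘ σ) volume volume := by
  have h := (volume_measurePreserving_piCongrLeft (fun _ : Fin m => ℝ) σ).symm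
    (MeasurableEquiv.piCongrLeft (fun _ : Fin m => ℝ) σ)
  have hfun : ⇑(MeasurableEquiv.piCongrLeft (fun _ : Fin m => ℝ) σ).symm
      = fun u : Fin m → ℝ => u ∘ σ := by
    funext u i
    rfl
  rwa [hfun] at h
lemma permSimplex_subset_Icc {m : ℕ} (π : Equiv.Perm (Fin m)) :
    permSimplex π 0 1 ⊆ Set.Icc (0 : Fin m → ℝ) 1 := by
  intro u hu
  refine ⟨fun i => (hu.1 i).1, fun i => (hu.1 i).2⟩

lemma volume_permSimplex {m : ℕ} (π : Equiv.Perm (Fin m)) :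
    volume (permSimplex π 0 1) = ((m.factorial : ℝ≥0∞))⁻¹ := by
  -- preimage under precomposition
  have hpreim : ∀ σ τ : Equiv.Perm (Fin m),
      (fun u : Fin m → ℝ => u ∘ σ) ⁻¹' permSimplex τ 0 1 = permSimplex (σ * τ) 0 1 := by
    intro σ τ
    ext u
    simp only [Set.mem_preimage, permSimplex, Set.mem_setOf_eq, Function.comp_apply]
    constructor
    · rintro ⟨h1, h2⟩
      refine ⟨fun i => ?_, fun i j hij => h2 hij⟩
      have := h1 (σ.symm i)
      rwa [Equiv.apply_symm_apply] at this
    · rintro ⟨h1, h2⟩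
      exact ⟨fun i => h1 (σ i), fun i j hij => h2 hij⟩
  have hvol_eq : ∀ τ : Equiv.Perm (Fin m),
      volume (permSimplex τ 0 1) = volume (permSimplex (1 : Equiv.Perm (Fin m)) 0 1) := by
    intro τ
    have h1 := (measurePreserving_comp_perm τ).measure_preimage
      (measurableSet_permSimplex (1 : Equiv.Perm (Fin m)) 0 1).nullMeasurableSet
    rw [hpreim τ 1, mul_one] at h1
    exact h1
  -- null set of collisions
  set N : Set (Fin m → ℝ) :=
    ⋃ (p : Fin m × Fin m) (_ : p.1 ≠ p.2), {u : Fin m → ℝ | u p.1 = u p.2} with hN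
  have hNnull : volume N = 0 := by
    rw [hN]
    refine measure_iUnion_null fun p => measure_iUnion_null fun hp => ?_
    set φ : (Fin m → ℝ) →ₗ[ℝ] ℝ :=
      (LinearMap.proj p.1 : (Fin m → ℝ) →ₗ[ℝ] ℝ) - LinearMap.proj p.2 with hφ
    have hker : {u : Fin m → ℝ | u p.1 = u p.2} = (LinearMap.ker φ : Set (Fin m → ℝ)) := by
      ext u
      simp only [Set.mem_setOf_eq, SetLike.mem_coe, LinearMap.mem_ker, hφ,
        LinearMap.sub_apply, LinearMap.proj_apply, sub_eq_zero]
    rw [hker]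
    refine Measure.addHaar_submodule _ _ ?_
    intro htop
    have hzero : φ = 0 := LinearMap.ker_eq_top.mp htop
    have : φ (Pi.single p.1 1) = 0 := by rw [hzero]; rfl
    rw [hφ] at this
    simp only [LinearMap.sub_apply, LinearMap.proj_apply] at this
    rw [Pi.single_eq_same, Pi.single_eq_of_ne (Ne.symm hp)] at this
    norm_num at this
  -- covering
  have hcover : Set.Icc (0 : Fin m → ℝ) 1 ⊆
      (⋃ τ : Equiv.Perm (Fin m), permSimplex τ 0 1) ∪ N := by
    intro u hu
    by_cases hinj : Function.Injective u
    · left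
      refine Set.mem_iUnion.mpr ⟨Tuple.sort u, ?_⟩
      refine ⟨fun i => ⟨hu.1 i, hu.2 i⟩, ?_⟩
      exact (Tuple.monotone_sort u).strictMono_of_injective
        (hinj.comp (Equiv.injective _))
    · right
      rw [Function.not_injective_iff] at hinj
      obtain ⟨a, b, hab, hne⟩ := hinj
      refine Set.mem_iUnion.mpr ⟨(a, b), Set.mem_iUnion.mpr ⟨hne, hab⟩⟩
  -- disjointness
  have hdisj : Pairwise (Function.onFun Disjoint fun τ : Equiv.Perm (Fin m) =>
      permSimplex τ 0 1) := by
    intro τ₁ τ₂ hne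
    rw [Function.onFun, Set.disjoint_left]
    intro u hu1 hu2
    apply hne
    have hm1 : Monotone (u ∘ τ₁) := (hu1.2).monotone
    have hm2 : Monotone (u ∘ τ₂) := (hu2.2).monotone
    have hequ : u ∘ τ₁ = u ∘ τ₂ := Tuple.unique_monotone hm1 hm2
    have hinj : Function.Injective u := by
      have h1 : Function.Injective (u ∘ τ₁) := (hu1.2).injective
      have : u = (u ∘ τ₁) ∘ τ₁.symm := by
        funext i; simp
      rw [this]
      exact h1.comp (Equiv.injective _)
    exact Equiv.ext fun i => hinj (congrFun hequ i)
  -- total measure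
  have hmeas : ∀ τ : Equiv.Perm (Fin m), MeasurableSet (permSimplex τ 0 1) :=
    fun τ => measurableSet_permSimplex τ 0 1
  have hunion : volume (⋃ τ : Equiv.Perm (Fin m), permSimplex τ 0 1)
      = (m.factorial : ℝ≥0∞) * volume (permSimplex (1 : Equiv.Perm (Fin m)) 0 1) := by
    rw [measure_iUnion hdisj hmeas]
    rw [tsum_fintype]
    have : ∀ τ : Equiv.Perm (Fin m), volume (permSimplex τ 0 1)
        = volume (permSimplex (1 : Equiv.Perm (Fin m)) 0 1) := hvol_eq
    rw [Finset.sum_congr rfl (fun τ _ => this τ), Finset.sum_const, Finset.card_univ,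
      Fintype.card_perm, Fintype.card_fin, nsmul_eq_mul]
  have hIcc : volume (Set.Icc (0 : Fin m → ℝ) 1) = 1 := by
    rw [Real.volume_Icc_pi]
    simp
  have hle1 : volume (⋃ τ : Equiv.Perm (Fin m), permSimplex τ 0 1) ≤ 1 := by
    rw [← hIcc]
    exact measure_mono (Set.iUnion_subset fun τ => permSimplex_subset_Icc τ)
  have hge1 : (1 : ℝ≥0∞) ≤ volume (⋃ τ : Equiv.Perm (Fin m), permSimplex τ 0 1) := by
    rw [← hIcc]
    calc volume (Set.Icc (0 : Fin m → ℝ) 1)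
        ≤ volume ((⋃ τ : Equiv.Perm (Fin m), permSimplex τ 0 1) ∪ N) := measure_mono hcover
      _ ≤ volume (⋃ τ : Equiv.Perm (Fin m), permSimplex τ 0 1) + volume N := measure_union_le _ _
      _ = volume (⋃ τ : Equiv.Perm (Fin m), permSimplex τ 0 1) := by rw [hNnull, add_zero]
  have heq1 : (m.factorial : ℝ≥0∞) * volume (permSimplex (1 : Equiv.Perm (Fin m)) 0 1) = 1 := by
    rw [← hunion]
    exact le_antisymm hle1 hge1
  have hfin : volume (permSimplex (1 : Equiv.Perm (Fin m)) 0 1) = ((m.factorial : ℝ≥0∞))⁻¹ :=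
    ENNReal.eq_inv_of_mul_eq_one_left (by rw [mul_comm] at heq1; exact heq1)
  rw [hvol_eq π, hfin]
lemma measurePreserving_transpose (m d : ℕ) :
    MeasurePreserving (fun (t : Fin m → Fin d → ℝ) (j : Fin d) (i : Fin m) => t i j)
      volume volume := by
  set T : (Fin m → Fin d → ℝ) → (Fin d → Fin m → ℝ) :=
    fun t j i => t i j with hT
  have hTm : Measurable T :=
    measurable_pi_lambda _ fun j => measurable_pi_lambda _ fun i =>
      (measurable_pi_apply j).comp (measurable_pi_apply i)
  refine ⟨hTm, ?_⟩
  have hvol : (volume : Measure (Fin d → Fin m → ℝ))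
      = Measure.pi (fun _ : Fin d => (volume : Measure (Fin m → ℝ))) := volume_pi
  rw [hvol]
  refine (Measure.pi_eq_generateFrom (fun _ => generateFrom_pi)
    (fun _ => isPiSystem_pi)
    (fun _ => Measure.FiniteSpanningSetsIn.pi
      (fun _ : Fin m => (volume : Measure ℝ).toFiniteSpanningSetsIn)) ?_).symm
  intro s hs
  have hrep : ∀ j : Fin d, ∃ r : Fin m → Set ℝ,
      (∀ i, MeasurableSet (r i)) ∧ Set.pi Set.univ r = s j := by
    intro j
    obtain ⟨v, hv, hveq⟩ := hs j
    exact ⟨v, fun i => hv i (Set.mem_univ i), hveq⟩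
  choose r hr hreq using hrep
  have hsmeas : ∀ j, MeasurableSet (s j) := fun j =>
    hreq j ▸ MeasurableSet.univ_pi (hr j)
  rw [Measure.map_apply hTm (MeasurableSet.univ_pi hsmeas)]
  have hpre : (T ⁻¹' Set.pi Set.univ s)
      = Set.pi Set.univ (fun i : Fin m => Set.pi Set.univ (fun j : Fin d => r j i)) := by
    ext t
    simp only [Set.mem_preimage, Set.mem_pi, Set.mem_univ, true_implies, ← hreq]
    exact forall_swap
  rw [hpre, volume_pi_pi]
  have : ∀ i : Fin m, volume (Set.pi Set.univ (fun j : Fin d => r j i))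
      = ∏ j : Fin d, volume (r j i) := fun i => volume_pi_pi _
  rw [Finset.prod_congr rfl (fun i _ => this i), Finset.prod_comm]
  refine Finset.prod_congr rfl fun j _ => ?_
  rw [← hreq j, ← volume_pi, volume_pi_pi]

lemma intDomain_eq_preimage {m d : ℕ} (π : Fin d → Equiv.Perm (Fin m)) :
    intDomain π (fun _ => 0) (fun _ => 1)
      = (fun (t : Fin m → Fin d → ℝ) (j : Fin d) (i : Fin m) => t i j) ⁻¹'
        (Set.pi Set.univ fun j => permSimplex (π j) 0 1) := by
  ext t
  simp only [intDomain, Set.mem_setOf_eq, Set.mem_preimage, Set.mem_pi, Set.mem_univ,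
    true_implies]

lemma measurableSet_intDomain {m d : ℕ} (π : Fin d → Equiv.Perm (Fin m)) :
    MeasurableSet (intDomain π (fun _ => 0) (fun _ => 1)) := by
  rw [intDomain_eq_preimage]
  exact (measurePreserving_transpose m d).measurable
    (MeasurableSet.univ_pi fun j => measurableSet_permSimplex (π j) 0 1)

lemma volume_intDomain {m d : ℕ} (π : Fin d → Equiv.Perm (Fin m)) :
    volume (intDomain π (fun _ => 0) (fun _ => 1)) = ((m.factorial : ℝ≥0∞))⁻¹ ^ d := by
  rw [intDomain_eq_preimage]
  rw [(measurePreserving_transpose m d).measure_preimage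
    (MeasurableSet.univ_pi fun j => measurableSet_permSimplex (π j) 0 1).nullMeasurableSet]
  rw [volume_pi_pi]
  simp [volume_permSimplex]

/-- Lipschitz-type continuity estimate for the monomials:
if `‖d̂x‖_∞ ≤ L`, `‖d̂y‖_∞ ≤ L` and `μ_∞(x,y) ≤ ε` then
`|Φ_m^{P,π}(x) − Φ_m^{P,π}(y)| ≤ m L^{m−1} ε/(m!)^d`. -/
theorem stmt7 (d n m : ℕ) (hd : 1 ≤ d) (hn : d ≤ n) (hm : 1 ≤ m) (L ε : ℝ)
    (hL : 0 < L) (hε : 0 < ε)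
    (x y : (Fin d → ℝ) → Fin n → ℝ) (hx : IsLipMap x) (hy : IsLipMap y)
    (hxb : jacNorm d n x ≤ L) (hyb : jacNorm d n y ≤ L)
    (hdiff : muInfty d n x y ≤ ε)
    (P : Fin m → Fin d → Fin n) (hP : ∀ i, StrictMono (P i))
    (π : Fin d → Equiv.Perm (Fin m)) :
    |msMonomial x P π - msMonomial y P π| ≤
      m * L ^ (m - 1) * ε / (Nat.factorial m : ℝ) ^ d := by
  classical
  set D := intDomain π (fun _ : Fin d => (0:ℝ)) (fun _ : Fin d => (1:ℝ)) with hDdef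
  have hDmeas : MeasurableSet D := measurableSet_intDomain π
  have hDvol : volume D = ((m.factorial : ℝ≥0∞))⁻¹ ^ d := volume_intDomain π
  have hDfin : volume D < ⊤ := by
    rw [hDvol]
    refine ENNReal.pow_lt_top ?_
    refine ENNReal.inv_lt_top.mpr ?_
    exact_mod_cast Nat.factorial_pos m
  obtain ⟨Mx, hMx0, hMx⟩ := jacobianMinor_bound hx
  obtain ⟨My, hMy0, hMy⟩ := jacobianMinor_bound hy
  have haeX : ∀ᵐ s ∂(volume.restrict (unitCube d)),
      ∀ Q : Fin d → Fin n, StrictMono Q → |jacobianMinor x Q s| ≤ L :=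
    ae_abs_le_of_essSup_le (fun Q s => jacobianMinor x Q s) (fun Q s => hMx Q s) hxb
  have haeY : ∀ᵐ s ∂(volume.restrict (unitCube d)),
      ∀ Q : Fin d → Fin n, StrictMono Q → |jacobianMinor y Q s| ≤ L :=
    ae_abs_le_of_essSup_le (fun Q s => jacobianMinor y Q s) (fun Q s => hMy Q s) hyb
  have haeD : ∀ᵐ s ∂(volume.restrict (unitCube d)),
      ∀ Q : Fin d → Fin n, StrictMono Q →
        |jacobianMinor x Q s - jacobianMinor y Q s| ≤ ε := by
    refine ae_abs_le_of_essSup_le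
      (fun Q s => jacobianMinor x Q s - jacobianMinor y Q s) (M := Mx + My)
      (fun Q s => ?_) hdiff
    calc |jacobianMinor x Q s - jacobianMinor y Q s|
        ≤ |jacobianMinor x Q s| + |jacobianMinor y Q s| := by
          rw [sub_eq_add_neg]
          refine (abs_add_le _ _).trans ?_
          rw [abs_neg]
      _ ≤ Mx + My := add_le_add (hMx Q s) (hMy Q s)
  have hcomb : ∀ᵐ s ∂(volume.restrict (unitCube d)),
      ∀ Q : Fin d → Fin n, StrictMono Q →
        |jacobianMinor x Q s| ≤ L ∧ |jacobianMinor y Q s| ≤ L ∧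
        |jacobianMinor x Q s - jacobianMinor y Q s| ≤ ε := by
    filter_upwards [haeX, haeY, haeD] with s h1 h2 h3 Q hQ
    exact ⟨h1 Q hQ, h2 Q hQ, h3 Q hQ⟩
  have hcube : MeasurableSet (unitCube d) := measurableSet_Icc
  have hglob : ∀ᵐ s ∂(volume : Measure (Fin d → ℝ)), s ∈ unitCube d →
      ∀ Q : Fin d → Fin n, StrictMono Q →
        |jacobianMinor x Q s| ≤ L ∧ |jacobianMinor y Q s| ≤ L ∧
        |jacobianMinor x Q s - jacobianMinor y Q s| ≤ ε :=
    (ae_restrict_iff' hcube).mp hcomb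
  have hbig : ∀ᵐ t ∂(volume : Measure (Fin m → Fin d → ℝ)), ∀ i : Fin m,
      t i ∈ unitCube d →
      ∀ Q : Fin d → Fin n, StrictMono Q →
        |jacobianMinor x Q (t i)| ≤ L ∧ |jacobianMinor y Q (t i)| ≤ L ∧
        |jacobianMinor x Q (t i) - jacobianMinor y Q (t i)| ≤ ε := by
    rw [ae_all_iff]
    intro i
    have hBad : volume {s : Fin d → ℝ | ¬ (s ∈ unitCube d →
        ∀ Q : Fin d → Fin n, StrictMono Q →
          |jacobianMinor x Q s| ≤ L ∧ |jacobianMinor y Q s| ≤ L ∧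
          |jacobianMinor x Q s - jacobianMinor y Q s| ≤ ε)} = 0 := ae_iff.mp hglob
    rw [ae_iff]
    have hset : {t : Fin m → Fin d → ℝ | ¬ (t i ∈ unitCube d →
        ∀ Q : Fin d → Fin n, StrictMono Q →
          |jacobianMinor x Q (t i)| ≤ L ∧ |jacobianMinor y Q (t i)| ≤ L ∧
          |jacobianMinor x Q (t i) - jacobianMinor y Q (t i)| ≤ ε)}
        = Function.eval i ⁻¹' {s : Fin d → ℝ | ¬ (s ∈ unitCube d →
        ∀ Q : Fin d → Fin n, StrictMono Q →
          |jacobianMinor x Q s| ≤ L ∧ |jacobianMinor y Q s| ≤ L ∧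
          |jacobianMinor x Q s - jacobianMinor y Q s| ≤ ε)} := rfl
    rw [hset, volume_pi]
    exact Measure.pi_eval_preimage_null _ hBad
  have hFm : Measurable (fun t : Fin m → Fin d → ℝ =>
      ∏ i, jacobianMinor x (P i) (t i)) :=
    Finset.measurable_prod _ fun i _ =>
      (measurable_jacobianMinor x (P i)).comp (measurable_pi_apply i)
  have hGm : Measurable (fun t : Fin m → Fin d → ℝ =>
      ∏ i, jacobianMinor y (P i) (t i)) :=
    Finset.measurable_prod _ fun i _ =>
      (measurable_jacobianMinor y (P i)).comp (measurable_pi_apply i)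
  have hFint : IntegrableOn (fun t : Fin m → Fin d → ℝ =>
      ∏ i, jacobianMinor x (P i) (t i)) D volume := by
    refine Integrable.mono' (g := fun _ => Mx ^ m)
      (integrableOn_const hDfin.ne) hFm.aestronglyMeasurable ?_
    filter_upwards with t
    rw [Real.norm_eq_abs, Finset.abs_prod]
    calc (∏ i, |jacobianMinor x (P i) (t i)|) ≤ ∏ _i : Fin m, Mx :=
          Finset.prod_le_prod (fun i _ => abs_nonneg _) (fun i _ => hMx (P i) (t i))
      _ = Mx ^ m := by rw [Finset.prod_const, Finset.card_univ, Fintype.card_fin]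
  have hGint : IntegrableOn (fun t : Fin m → Fin d → ℝ =>
      ∏ i, jacobianMinor y (P i) (t i)) D volume := by
    refine Integrable.mono' (g := fun _ => My ^ m)
      (integrableOn_const hDfin.ne) hGm.aestronglyMeasurable ?_
    filter_upwards with t
    rw [Real.norm_eq_abs, Finset.abs_prod]
    calc (∏ i, |jacobianMinor y (P i) (t i)|) ≤ ∏ _i : Fin m, My :=
          Finset.prod_le_prod (fun i _ => abs_nonneg _) (fun i _ => hMy (P i) (t i))
      _ = My ^ m := by rw [Finset.prod_const, Finset.card_univ, Fintype.card_fin]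
  have hboundD : ∀ᵐ t ∂(volume.restrict D),
      ‖(∏ i, jacobianMinor x (P i) (t i)) - ∏ i, jacobianMinor y (P i) (t i)‖
        ≤ (m : ℝ) * ε * L ^ (m - 1) := by
    filter_upwards [ae_restrict_of_ae hbig, ae_restrict_mem hDmeas] with t ht htD
    have hrow : ∀ i : Fin m, t i ∈ unitCube d := by
      intro i
      have hj : ∀ j, t i j ∈ Set.Icc (0:ℝ) 1 := fun j => (htD j).1 i
      exact ⟨fun j => (hj j).1, fun j => (hj j).2⟩
    have hgood := fun i => ht i (hrow i)
    have hmain := abs_prod_sub_prod_le (Finset.univ : Finset (Fin m))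
      (fun i => jacobianMinor x (P i) (t i)) (fun i => jacobianMinor y (P i) (t i))
      hL.le hε.le
      (fun i _ => (hgood i (P i) (hP i)).1)
      (fun i _ => (hgood i (P i) (hP i)).2.1)
      (fun i _ => (hgood i (P i) (hP i)).2.2)
    rw [Real.norm_eq_abs]
    simpa [Finset.card_univ] using hmain
  have hsub : msMonomial x P π - msMonomial y P π
      = ∫ t in D, ((∏ i, jacobianMinor x (P i) (t i))
          - ∏ i, jacobianMinor y (P i) (t i)) ∂volume := by
    rw [msMonomial, msMonomialOn, msMonomial, msMonomialOn]
    exact (integral_sub hFint hGint).symm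
  rw [hsub]
  have hkey := norm_setIntegral_le_of_norm_le_const_ae (μ := volume) (s := D)
    (C := (m : ℝ) * ε * L ^ (m - 1)) hDfin hboundD
  rw [Real.norm_eq_abs] at hkey
  refine le_trans hkey (le_of_eq ?_)
  rw [measureReal_def, hDvol, ENNReal.toReal_pow, ENNReal.toReal_inv, ENNReal.toReal_natCast,
    div_eq_mul_inv, ← inv_pow]
  ring

end
end
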